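/- Let B : Ω → Set X be a random set whose range is a finite chain under inclusion, p ∈ (0,1), and let b_p be the ⊆-smallest set in the range with P(B ⊆ b_p) ≥ p (which exists). Then every x ∈ b_p has occupancy O(x) = P(x ∈ B) > 1 − p; in particular b_p ⊆ Q(1 − p). -/

import Mathlib

open MeasureTheory
open scoped ENNReal

/-- For a random set whose range is a finite chain under inclusion, if `b_p` is
the `⊆`-smallest set in the range with `P(B ⊆ b_p) ≥ p`, then every point of
`b_p` has occupancy greater than `1 - p`; in particular `b_p ⊆ Q(1 - p)`. -/
theorem quantile_box_subset_occupancy_quantile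
    {Ω X : Type*} [MeasurableSpace Ω] (P : Measure Ω) [IsProbabilityMeasure P]
    (B : Ω → Set X)
    (hfin : (Set.range B).Finite)
    (hchain : ∀ ω₁ ω₂, B ω₁ ⊆ B ω₂ ∨ B ω₂ ⊆ B ω₁)
    (p : ℝ≥0∞) (hp : p ∈ Set.Ioo (0 : ℝ≥0∞) 1)
    (bp : Set X)
    (hbp_mem : bp ∈ Set.range B)
    (hbp_conf : P {ω | B ω ⊆ bp} ≥ p)
    (hbp_least : ∀ b ∈ Set.range B, P {ω | B ω ⊆ b} ≥ p → bp ⊆ b) :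
    (∀ x ∈ bp, P {ω | x ∈ B ω} > 1 - p) ∧
      bp ⊆ {x | P {ω | x ∈ B ω} > 1 - p} := by
  obtain ⟨ωp, hωp⟩ := hbp_mem
  have key : ∀ x ∈ bp, P {ω | x ∈ B ω} > 1 - p := by
    intro x hx
    have hq : P {ω | x ∉ B ω} < p := by
      by_cases hS : ∃ ω₀, x ∉ B ω₀
      · obtain ⟨ω₀, hω₀⟩ := hS
        set S : Set (Set X) := {b | b ∈ Set.range B ∧ b ⊆ bp ∧ b ≠ bp} with hSdef
        have hSfin : S.Finite := hfin.subset (fun b hb => hb.1)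
        have hmemS : ∀ ω, x ∉ B ω → B ω ∈ S := by
          intro ω hω
          refine ⟨Set.mem_range_self ω, ?_, ?_⟩
          · rcases hchain ω ωp with h | h
            · rwa [hωp] at h
            · exact absurd (h (hωp ▸ hx)) hω
          · intro h
            exact hω (h ▸ hx)
        have hSne : S.Nonempty := ⟨B ω₀, hmemS ω₀ hω₀⟩
        obtain ⟨b', hb'S, hb'max⟩ :=
          Set.Finite.exists_maximalFor id S hSfin hSne
        have hsub : {ω | x ∉ B ω} ⊆ {ω | B ω ⊆ b'} := by
          intro ω hω
          have hωS := hmemS ω hω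
          obtain ⟨ω', hω'⟩ := hb'S.1
          rcases hchain ω ω' with h | h
          · show B ω ⊆ b'
            rw [← hω']; exact h
          · have heq : b' = B ω := subset_antisymm (hω' ▸ h) (hb'max hωS (hω' ▸ h))
            show B ω ⊆ b'
            rw [heq]
        have hP' : P {ω | B ω ⊆ b'} < p := by
          by_contra hle
          push_neg at hle
          have := hbp_least b' hb'S.1 hle
          exact hb'S.2.2 (subset_antisymm hb'S.2.1 this)
        exact lt_of_le_of_lt (measure_mono hsub) hP'
      · push_neg at hS
        have : {ω | x ∉ B ω} = ∅ := by
          ext ω; simp [hS ω]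
        rw [this, measure_empty]
        exact hp.1
    have h1 : (1 : ℝ≥0∞) ≤ P {ω | x ∈ B ω} + P {ω | x ∉ B ω} := by
      have huniv : (Set.univ : Set Ω) ⊆ {ω | x ∈ B ω} ∪ {ω | x ∉ B ω} := by
        intro ω _
        by_cases h : x ∈ B ω
        · exact Or.inl h
        · exact Or.inr h
      calc (1 : ℝ≥0∞) = P Set.univ := (measure_univ).symm
        _ ≤ P ({ω | x ∈ B ω} ∪ {ω | x ∉ B ω}) := measure_mono huniv
        _ ≤ _ := measure_union_le _ _
    have hm : P {ω | x ∈ B ω} ≠ ∞ := measure_ne_top P _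
    have h2 : (1 : ℝ≥0∞) < P {ω | x ∈ B ω} + p :=
      lt_of_le_of_lt h1 (ENNReal.add_lt_add_left hm hq)
    rw [gt_iff_lt, ENNReal.sub_lt_iff_lt_right (hp.2.trans_le le_top).ne hp.2.le]
    exact h2
  exact ⟨key, fun x hx => key x hx⟩
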